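/- For every $\mu > -\pi^2$ there exists a unique positive solution $\phi_\mu \in H^3\cap H^1_0((0,1),\mathbb{R})$ of the boundary value problem $\phi'' + \phi^3 = \mu\phi$ on $(0,1)$ with $\phi(0)=\phi(1)=0$ (the focusing ground state). -/

import Mathlib

namespace GSaux

open Set intervalIntegral MeasureTheory Filter Real Topology



noncomputable def gg (μ a u : ℝ) : ℝ := Real.sqrt ((a^2*(1 + Real.sin u^2) - 2*μ)/2)

variable {μ a : ℝ}

lemma amu_pos (h : 2*μ < a^2) : 0 < a^2 - μ := by nlinarith [sq_nonneg a]

lemma inner_pos (h : 2*μ < a^2) (u : ℝ) : 0 < (a^2*(1 + Real.sin u^2) - 2*μ)/2 := by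
  nlinarith [sq_nonneg (Real.sin u), sq_nonneg a]

lemma gg_pos (h : 2*μ < a^2) (u : ℝ) : 0 < gg μ a u := Real.sqrt_pos.2 (inner_pos h u)

lemma gg_sq (h : 2*μ < a^2) (u : ℝ) :
    gg μ a u ^ 2 = (a^2*(1 + Real.sin u^2) - 2*μ)/2 := Real.sq_sqrt (inner_pos h u).le

lemma gg_le (h : 2*μ < a^2) (u : ℝ) : gg μ a u ≤ Real.sqrt (a^2 - μ) := by
  apply Real.sqrt_le_sqrt
  nlinarith [Real.sin_sq_le_one u, sq_nonneg a]

lemma gg_ge (h : 2*μ < a^2) (u : ℝ) : Real.sqrt ((a^2 - 2*μ)/2) ≤ gg μ a u := by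
  apply Real.sqrt_le_sqrt
  nlinarith [sq_nonneg (Real.sin u), sq_nonneg a]

lemma continuous_gg : Continuous (gg μ a) := by
  apply Real.continuous_sqrt.comp
  continuity

lemma hasDerivAt_gg (h : 2*μ < a^2) (u : ℝ) :
    HasDerivAt (gg μ a) (a^2 * Real.sin u * Real.cos u / (2 * gg μ a u)) u := by
  have h1 : HasDerivAt (fun u : ℝ => (a^2*(1 + Real.sin u^2) - 2*μ)/2)
      (a^2 * Real.sin u * Real.cos u) u := by
    have hs : HasDerivAt (fun u : ℝ => Real.sin u ^ 2) (2 * Real.sin u * Real.cos u) u := by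
      exact ((Real.hasDerivAt_sin u).pow 2).congr_deriv (by ring)
    have := ((((hs.const_add 1).const_mul (a^2))).sub_const (2*μ)).div_const 2
    refine this.congr_deriv (Eq.symm ?_)
    ring
  have h2 := (Real.hasDerivAt_sqrt (ne_of_gt (inner_pos h u))).comp u h1
  refine h2.congr_deriv (Eq.symm ?_)
  unfold gg
  field_simp


noncomputable def HH (μ a θ : ℝ) : ℝ := ∫ u in (0:ℝ)..θ, (gg μ a u)⁻¹

lemma continuous_invgg (h : 2*μ < a^2) : Continuous (fun u => (gg μ a u)⁻¹) :=
  continuous_gg.inv₀ (fun u => (gg_pos h u).ne')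

lemma hasDerivAt_HH (h : 2*μ < a^2) (θ : ℝ) : HasDerivAt (HH μ a) (gg μ a θ)⁻¹ θ :=
  intervalIntegral.integral_hasDerivAt_right
    ((continuous_invgg h).intervalIntegrable _ _)
    ((continuous_invgg h).aestronglyMeasurable.stronglyMeasurableAtFilter)
    (continuous_invgg h).continuousAt

lemma continuous_HH (h : 2*μ < a^2) : Continuous (HH μ a) := continuous_iff_continuousAt.2 <| by
  exact fun θ => (hasDerivAt_HH h θ).continuousAt

lemma strictMono_HH (h : 2*μ < a^2) : StrictMono (HH μ a) :=
  strictMono_of_deriv_pos (fun θ => by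
    rw [(hasDerivAt_HH h θ).deriv]; exact inv_pos.2 (gg_pos h θ))

lemma cg_pos (h : 2*μ < a^2) : 0 < (Real.sqrt (a^2 - μ))⁻¹ :=
  inv_pos.2 (Real.sqrt_pos.2 (amu_pos h))

lemma HH_ge (h : 2*μ < a^2) {θ : ℝ} (hθ : 0 ≤ θ) :
    (Real.sqrt (a^2 - μ))⁻¹ * θ ≤ HH μ a θ := by
  have : ∀ u ∈ Icc (0:ℝ) θ, (Real.sqrt (a^2 - μ))⁻¹ ≤ (gg μ a u)⁻¹ := by
    intro u _
    exact inv_anti₀ (gg_pos h u) (gg_le h u)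
  calc (Real.sqrt (a^2 - μ))⁻¹ * θ = ∫ _ in (0:ℝ)..θ, (Real.sqrt (a^2 - μ))⁻¹ := by
        simp [mul_comm]
    _ ≤ HH μ a θ := intervalIntegral.integral_mono_on hθ (intervalIntegrable_const)
        (((continuous_invgg h)).intervalIntegrable _ _) this

lemma HH_le (h : 2*μ < a^2) {θ : ℝ} (hθ : θ ≤ 0) :
    HH μ a θ ≤ (Real.sqrt (a^2 - μ))⁻¹ * θ := by
  have h1 : HH μ a θ = - ∫ u in θ..(0:ℝ), (gg μ a u)⁻¹ := by
    rw [intervalIntegral.integral_symm]; simp [HH]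
  have : ∀ u ∈ Icc θ (0:ℝ), (Real.sqrt (a^2 - μ))⁻¹ ≤ (gg μ a u)⁻¹ := by
    intro u _
    exact inv_anti₀ (gg_pos h u) (gg_le h u)
  have h2 : (Real.sqrt (a^2 - μ))⁻¹ * (0 - θ) ≤ ∫ u in θ..(0:ℝ), (gg μ a u)⁻¹ := by
    calc (Real.sqrt (a^2 - μ))⁻¹ * (0 - θ)
        = ∫ _ in θ..(0:ℝ), (Real.sqrt (a^2 - μ))⁻¹ := by simp [mul_comm]
      _ ≤ _ := intervalIntegral.integral_mono_on hθ (intervalIntegrable_const)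
        (((continuous_invgg h)).intervalIntegrable _ _) this
  rw [h1]; linarith
lemma HH_surj (h : 2*μ < a^2) : Function.Surjective (HH μ a) := by
  have htop : Tendsto (fun θ : ℝ => (Real.sqrt (a^2 - μ))⁻¹ * θ) atTop atTop :=
    Tendsto.const_mul_atTop (cg_pos h) tendsto_id
  have hbot : Tendsto (fun θ : ℝ => (Real.sqrt (a^2 - μ))⁻¹ * θ) atBot atBot :=
    Tendsto.const_mul_atBot (cg_pos h) tendsto_id
  apply (continuous_HH h).surjective
  · apply tendsto_atTop_mono' _ _ htop
    filter_upwards [eventually_ge_atTop (0:ℝ)] with θ hθ using HH_ge h hθ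
  · apply tendsto_atBot_mono' _ _ hbot
    filter_upwards [eventually_le_atBot (0:ℝ)] with θ hθ using HH_le h hθ

lemma HH_zero : HH μ a 0 = 0 := by simp [HH]

noncomputable def tt (μ a : ℝ) : ℝ → ℝ := Function.invFun (HH μ a)

lemma HH_tt (h : 2*μ < a^2) (y : ℝ) : HH μ a (tt μ a y) = y :=
  Function.rightInverse_invFun (HH_surj h) y

lemma tt_HH (h : 2*μ < a^2) (x : ℝ) : tt μ a (HH μ a x) = x :=
  Function.leftInverse_invFun (strictMono_HH h).injective x

lemma tt_zero (h : 2*μ < a^2) : tt μ a 0 = 0 := by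
  have := tt_HH h 0; rwa [HH_zero] at this

lemma strictMono_tt (h : 2*μ < a^2) : StrictMono (tt μ a) := by
  intro x y hxy
  rcases lt_trichotomy (tt μ a x) (tt μ a y) with h1 | h1 | h1
  · exact h1
  · exfalso; have := congrArg (HH μ a) h1; rw [HH_tt h, HH_tt h] at this; linarith
  · exfalso
    have := strictMono_HH h h1
    rw [HH_tt h, HH_tt h] at this; linarith

lemma continuous_tt (h : 2*μ < a^2) : Continuous (tt μ a) := by
  have e := StrictMono.orderIsoOfSurjective (HH μ a) (strictMono_HH h) (HH_surj h)
  have : tt μ a = (StrictMono.orderIsoOfSurjective (HH μ a) (strictMono_HH h)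
      (HH_surj h)).symm := by
    funext y
    apply (strictMono_HH h).injective
    rw [HH_tt h]
    exact (StrictMono.orderIsoOfSurjective_self_symm_apply _ _ _ _).symm
  rw [this]
  exact OrderIso.continuous _

lemma hasDerivAt_tt (h : 2*μ < a^2) (x : ℝ) :
    HasDerivAt (tt μ a) (gg μ a (tt μ a x)) x := by
  have := HasDerivAt.of_local_left_inverse ((continuous_tt h).continuousAt)
    (hasDerivAt_HH h (tt μ a x)) ((inv_pos.2 (gg_pos h _)).ne')
    (Eventually.of_forall (HH_tt h))
  simpa using this
noncomputable def pp (μ a x : ℝ) : ℝ := a * Real.sin (tt μ a x)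
noncomputable def p1 (μ a x : ℝ) : ℝ := a * Real.cos (tt μ a x) * gg μ a (tt μ a x)
noncomputable def p2 (μ a x : ℝ) : ℝ := μ * pp μ a x - pp μ a x ^ 3
noncomputable def p3 (μ a x : ℝ) : ℝ := μ * p1 μ a x - 3 * pp μ a x ^ 2 * p1 μ a x

lemma hasDerivAt_pp (h : 2*μ < a^2) (x : ℝ) : HasDerivAt (pp μ a) (p1 μ a x) x := by
  have h1 := (Real.hasDerivAt_sin (tt μ a x)).comp x (hasDerivAt_tt h x)
  have := h1.const_mul a
  refine this.congr_deriv (Eq.symm ?_)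
  unfold p1; ring

lemma hasDerivAt_p1 (h : 2*μ < a^2) (x : ℝ) : HasDerivAt (p1 μ a) (p2 μ a x) x := by
  have ht := hasDerivAt_tt h x
  have hc := (Real.hasDerivAt_cos (tt μ a x)).comp x ht
  have hg := (hasDerivAt_gg h (tt μ a x)).comp x ht
  have hmul := ((hc.const_mul a).mul hg)
  refine hmul.congr_deriv (Eq.symm ?_)
  have hgpos := gg_pos h (tt μ a x)
  have hgsq := gg_sq h (tt μ a x)
  have hsc := Real.sin_sq_add_cos_sq (tt μ a x)
  unfold p2 pp
  set s := Real.sin (tt μ a x) with hs0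
  set c := Real.cos (tt μ a x) with hc0
  set G := gg μ a (tt μ a x) with hG
  have hval : a ^ 2 * s * c / (2 * G) * G = a ^ 2 * s * c / 2 := by
    field_simp
  rw [hval]
  simp only [Function.comp_apply, ← hG, ← hc0]
  linear_combination (a*s) * hgsq - (a^3*s/2) * hsc

lemma hasDerivAt_p2 (h : 2*μ < a^2) (x : ℝ) : HasDerivAt (p2 μ a) (p3 μ a x) x := by
  have hp := hasDerivAt_pp h x
  have := (hp.const_mul μ).sub (hp.pow 3)
  exact this.congr_deriv (by norm_num [p3])

lemma continuous_pp (h : 2*μ < a^2) : Continuous (pp μ a) :=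
  continuous_const.mul (Real.continuous_sin.comp (continuous_tt h))

lemma continuous_p1 (h : 2*μ < a^2) : Continuous (p1 μ a) :=
  (continuous_const.mul (Real.continuous_cos.comp (continuous_tt h))).mul
    (continuous_gg.comp (continuous_tt h))

lemma continuous_p3 (h : 2*μ < a^2) : Continuous (p3 μ a) := by
  unfold p3
  exact (continuous_const.mul (continuous_p1 h)).sub
    ((continuous_const.mul ((continuous_pp h).pow 2)).mul (continuous_p1 h))
lemma cube_lip {x y R : ℝ} (hx : |x| ≤ R) (hy : |y| ≤ R) :
    |x^3 - y^3| ≤ 3*R^2*|x - y| := by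
  have h1 : x^3 - y^3 = (x - y)*(x^2 + x*y + y^2) := by ring
  rw [h1, abs_mul, mul_comm (3*R^2)]
  apply mul_le_mul_of_nonneg_left _ (abs_nonneg _)
  calc |x^2 + x*y + y^2| ≤ |x^2 + x*y| + |y^2| := abs_add_le _ _
    _ ≤ |x^2| + |x*y| + |y^2| := by have := abs_add_le (x^2) (x*y); linarith
    _ = x^2 + |x| * |y| + y^2 := by rw [abs_mul, abs_of_nonneg (sq_nonneg x), abs_of_nonneg (sq_nonneg y)]
    _ ≤ 3*R^2 := by nlinarith [abs_nonneg x, abs_nonneg y, sq_abs x, sq_abs y]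

lemma lip_v (μ R : ℝ) (hR : 0 ≤ R) :
    LipschitzOnWith (Real.toNNReal (1 + |μ| + 3*R^2))
      (fun p : ℝ × ℝ => (p.2, μ * p.1 - p.1^3)) (Metric.closedBall 0 R) := by
  rw [lipschitzOnWith_iff_dist_le_mul]
  intro p hp q hq
  have hKnn : (0:ℝ) ≤ 1 + |μ| + 3*R^2 := by positivity
  rw [Real.coe_toNNReal _ hKnn]
  have hp1 : |p.1| ≤ R := by
    have := mem_closedBall_zero_iff.1 hp
    exact le_trans (le_max_left _ _) (by simpa [Prod.norm_def] using this)
  have hq1 : |q.1| ≤ R := by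
    have := mem_closedBall_zero_iff.1 hq
    exact le_trans (le_max_left _ _) (by simpa [Prod.norm_def] using this)
  rw [Prod.dist_eq, Prod.dist_eq]
  simp only [Real.dist_eq]
  set d1 := |p.1 - q.1|
  set d2 := |p.2 - q.2|
  have hd1 : (0:ℝ) ≤ d1 := abs_nonneg _
  have hd2 : (0:ℝ) ≤ d2 := abs_nonneg _
  have hD1 : d1 ≤ max d1 d2 := le_max_left _ _
  have hD2 : d2 ≤ max d1 d2 := le_max_right _ _
  apply max_le
  · calc d2 ≤ max d1 d2 := hD2
      _ = 1 * max d1 d2 := (one_mul _).symm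
      _ ≤ (1 + |μ| + 3*R^2) * max d1 d2 := by
          apply mul_le_mul_of_nonneg_right _ (le_trans hd2 hD2)
          nlinarith [abs_nonneg μ, sq_nonneg R]
  · have hsplit : |μ * p.1 - p.1^3 - (μ * q.1 - q.1^3)| ≤ |μ| * d1 + 3*R^2*d1 := by
      have h2 : μ * p.1 - p.1^3 - (μ * q.1 - q.1^3) = μ*(p.1 - q.1) - (p.1^3 - q.1^3) := by
        ring
      rw [h2]
      calc |μ*(p.1 - q.1) - (p.1^3 - q.1^3)| ≤ |μ*(p.1 - q.1)| + |p.1^3 - q.1^3| :=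
            abs_sub _ _
        _ ≤ |μ| * d1 + 3*R^2*d1 := by
            rw [abs_mul]
            exact add_le_add le_rfl (cube_lip hp1 hq1)
    have : |μ| * d1 + 3*R^2*d1 ≤ (1 + |μ| + 3*R^2) * max d1 d2 := by
      nlinarith [abs_nonneg μ, sq_nonneg R, le_trans hd1 hD1]
    linarith
lemma ode_unique {μ : ℝ} {f f1 g g1 : ℝ → ℝ}
    (hf : ∀ x ∈ Icc (0:ℝ) 1, HasDerivAt f (f1 x) x)
    (hf1 : ∀ x ∈ Icc (0:ℝ) 1, HasDerivAt f1 (μ * f x - f x ^ 3) x)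
    (hg : ∀ x ∈ Icc (0:ℝ) 1, HasDerivAt g (g1 x) x)
    (hg1 : ∀ x ∈ Icc (0:ℝ) 1, HasDerivAt g1 (μ * g x - g x ^ 3) x)
    (h0 : f 0 = g 0) (h0' : f1 0 = g1 0) :
    ∀ x ∈ Icc (0:ℝ) 1, f x = g x ∧ f1 x = g1 x := by
  set F : ℝ → ℝ × ℝ := fun x => (f x, f1 x) with hF
  set G : ℝ → ℝ × ℝ := fun x => (g x, g1 x) with hG
  have hFc : ContinuousOn F (Icc 0 1) := fun x hx =>
    (((hf x hx).continuousAt.prodMk ((hf1 x hx)).continuousAt)).continuousWithinAt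
  have hGc : ContinuousOn G (Icc 0 1) := fun x hx =>
    (((hg x hx).continuousAt.prodMk ((hg1 x hx)).continuousAt)).continuousWithinAt
  obtain ⟨Cf, hCf⟩ := (isCompact_Icc (a := (0:ℝ)) (b := 1)).exists_bound_of_continuousOn hFc
  obtain ⟨Cg, hCg⟩ := (isCompact_Icc (a := (0:ℝ)) (b := 1)).exists_bound_of_continuousOn hGc
  set R : ℝ := max (max Cf Cg) 0 with hR
  have hR0 : 0 ≤ R := le_max_right _ _
  set v : ℝ → ℝ × ℝ → ℝ × ℝ := fun _ p => (p.2, μ * p.1 - p.1^3) with hv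
  have hlip : ∀ t : ℝ, LipschitzOnWith (Real.toNNReal (1 + |μ| + 3*R^2)) (v t)
      (Metric.closedBall 0 R) := fun t => lip_v μ R hR0
  have key : EqOn F G (Icc 0 1) := by
    apply ODE_solution_unique_of_mem_Icc_right (fun t _ => hlip t) hFc ?_ ?_ hGc ?_ ?_
    · rw [hF, hG]; simp [h0, h0']
    · intro t ht
      have hd : HasDerivAt F (f1 t, μ * f t - f t ^ 3) t :=
        (hf t (Ico_subset_Icc_self ht)).prodMk (hf1 t (Ico_subset_Icc_self ht))
      exact hd.hasDerivWithinAt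
    · intro t ht
      rw [Metric.mem_closedBall, dist_zero_right]
      exact le_trans (hCf t (Ico_subset_Icc_self ht)) (le_trans (le_max_left _ _)
        (le_max_left _ _))
    · intro t ht
      have hd : HasDerivAt G (g1 t, μ * g t - g t ^ 3) t :=
        (hg t (Ico_subset_Icc_self ht)).prodMk (hg1 t (Ico_subset_Icc_self ht))
      exact hd.hasDerivWithinAt
    · intro t ht
      rw [Metric.mem_closedBall, dist_zero_right]
      exact le_trans (hCg t (Ico_subset_Icc_self ht)) (le_trans (le_max_right _ _)
        (le_max_left _ _))
  intro x hx
  have := key hx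
  constructor
  · exact congrArg Prod.fst this
  · exact congrArg Prod.snd this
lemma S_contAt (h : 2*μ < a^2) : ContinuousAt (fun b => HH μ b π) a := by
  set m := (a^2 - 2*μ)/4 with hm
  have hm0 : 0 < m := by rw [hm]; linarith
  set F : ℝ → ℝ := fun b =>
    ∫ u in (0:ℝ)..π, (Real.sqrt (max ((b^2*(1 + Real.sin u^2) - 2*μ)/2) m))⁻¹ with hF
  have hFc : Continuous F := by
    apply intervalIntegral.continuous_parametric_intervalIntegral_of_continuous'
    apply Continuous.inv₀
    · apply Real.continuous_sqrt.comp
      apply Continuous.max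
      · fun_prop
      · exact continuous_const
    · intro p
      exact (Real.sqrt_pos.2 (lt_max_of_lt_right hm0)).ne'
  apply hFc.continuousAt.congr
  have hopen : IsOpen {b : ℝ | a^2 - 2*m < b^2} :=
    isOpen_lt continuous_const (continuous_pow 2)
  have hmem : a ∈ {b : ℝ | a^2 - 2*m < b^2} := by simp only [mem_setOf_eq]; linarith
  filter_upwards [hopen.mem_nhds hmem] with b hb
  rw [hF]
  unfold HH gg
  apply intervalIntegral.integral_congr
  intro u _
  have hmax : (b^2*(1 + Real.sin u^2) - 2*μ)/2 ⊔ m = (b^2*(1 + Real.sin u^2) - 2*μ)/2 :=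
    max_eq_left (by nlinarith [sq_nonneg (Real.sin u), sq_nonneg b])
  simp only [hmax]

lemma S_upper (h : 2*μ < a^2) : HH μ a π ≤ π * (Real.sqrt ((a^2-2*μ)/2))⁻¹ := by
  have hb : ∀ u ∈ Icc (0:ℝ) π, (gg μ a u)⁻¹ ≤ (Real.sqrt ((a^2-2*μ)/2))⁻¹ := by
    intro u _
    exact inv_anti₀ (Real.sqrt_pos.2 (by linarith)) (gg_ge h u)
  calc HH μ a π ≤ ∫ _ in (0:ℝ)..π, (Real.sqrt ((a^2-2*μ)/2))⁻¹ :=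
        intervalIntegral.integral_mono_on Real.pi_pos.le
          ((continuous_invgg h).intervalIntegrable _ _) intervalIntegrable_const hb
    _ = π * (Real.sqrt ((a^2-2*μ)/2))⁻¹ := by simp; ring

lemma S_lower (h : 2*μ < a^2) : π * (Real.sqrt (a^2-μ))⁻¹ ≤ HH μ a π := by
  have := HH_ge h Real.pi_pos.le
  linarith [this]

lemma S_big (hμ : -Real.pi^2 < μ) :
    HH μ (Real.sqrt (2*μ + 4*Real.pi^2 + 1)) π < 1 := by
  have hπ := Real.pi_pos
  have harg : (0:ℝ) ≤ 2*μ + 4*Real.pi^2 + 1 := by nlinarith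
  have hA2 : (Real.sqrt (2*μ + 4*Real.pi^2 + 1))^2 = 2*μ + 4*Real.pi^2 + 1 :=
    Real.sq_sqrt harg
  have h : 2*μ < (Real.sqrt (2*μ + 4*Real.pi^2 + 1))^2 := by rw [hA2]; nlinarith
  have h1 := S_upper h
  have h2 : ((Real.sqrt (2*μ + 4*Real.pi^2 + 1))^2 - 2*μ)/2 = (4*Real.pi^2+1)/2 := by
    rw [hA2]; ring
  rw [h2] at h1
  have h3 : π < Real.sqrt ((4*Real.pi^2+1)/2) := by
    have : π = Real.sqrt (π^2) := (Real.sqrt_sq hπ.le).symm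
    rw [this]
    apply Real.sqrt_lt_sqrt (sq_nonneg _)
    nlinarith
  have h4 : 0 < Real.sqrt ((4*Real.pi^2+1)/2) := lt_trans hπ h3
  calc HH μ (Real.sqrt (2*μ + 4*Real.pi^2 + 1)) π
      ≤ π * (Real.sqrt ((4*Real.pi^2+1)/2))⁻¹ := h1
    _ < 1 := by
        rw [mul_inv_lt_iff₀ h4, one_mul]
        exact h3
lemma S_zero_val (hμneg : μ < 0) : HH μ 0 π = π * (Real.sqrt (-μ))⁻¹ := by
  unfold HH
  have hg0 : ∀ u : ℝ, (gg μ 0 u)⁻¹ = (Real.sqrt (-μ))⁻¹ := by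
    intro u; unfold gg
    congr 1
    congr 1
    ring
  simp only [hg0]
  simp

lemma S_zero_gt (hμ : -Real.pi^2 < μ) (hμneg : μ < 0) : 1 < HH μ 0 π := by
  rw [S_zero_val hμneg]
  have h2 : 0 < Real.sqrt (-μ) := Real.sqrt_pos.2 (by linarith)
  have h1 : Real.sqrt (-μ) < π := by
    rw [show π = Real.sqrt (π^2) from (Real.sqrt_sq Real.pi_pos.le).symm]
    exact Real.sqrt_lt_sqrt (by linarith) (by linarith)
  calc (1:ℝ) = Real.sqrt (-μ) * (Real.sqrt (-μ))⁻¹ := (mul_inv_cancel₀ h2.ne').symm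
    _ < π * (Real.sqrt (-μ))⁻¹ := by
        exact mul_lt_mul_of_pos_right h1 (inv_pos.2 h2)

lemma S_one_gt (hμ0 : μ = 0) : 1 < HH μ 1 π := by
  subst hμ0
  have h : 2*(0:ℝ) < 1^2 := by norm_num
  have hb : ∀ u ∈ Icc (0:ℝ) π, (1:ℝ) ≤ (gg 0 1 u)⁻¹ := by
    intro u _
    rw [le_inv_comm₀ one_pos (gg_pos h u)]
    have : gg 0 1 u ≤ Real.sqrt 1 := by
      apply Real.sqrt_le_sqrt
      nlinarith [Real.sin_sq_le_one u]
    simpa using this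
  have := intervalIntegral.integral_mono_on Real.pi_pos.le
    (intervalIntegrable_const : IntervalIntegrable _ MeasureTheory.volume 0 π)
    ((continuous_invgg h).intervalIntegrable _ _) hb
  simp at this
  calc (1:ℝ) < π := by nlinarith [Real.pi_gt_three]
    _ ≤ HH 0 1 π := this

lemma sqrt_add_le' {x y : ℝ} (hx : 0 ≤ x) (hy : 0 ≤ y) :
    Real.sqrt (x + y) ≤ Real.sqrt x + Real.sqrt y := by
  rw [show Real.sqrt x + Real.sqrt y = Real.sqrt ((Real.sqrt x + Real.sqrt y)^2) from
    (Real.sqrt_sq (by positivity)).symm]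
  apply Real.sqrt_le_sqrt
  nlinarith [Real.sq_sqrt hx, Real.sq_sqrt hy, Real.sqrt_nonneg x, Real.sqrt_nonneg y,
    mul_nonneg (Real.sqrt_nonneg x) (Real.sqrt_nonneg y)]

lemma S_small_gt (hμpos : 0 < μ) :
    ∃ c, 0 ≤ c ∧ 2*μ < c^2 ∧ 1 < HH μ c π := by
  have hπ := Real.pi_pos
  set A1 := Real.sqrt (2*μ+1) with hA1
  have hA1pos : 0 < A1 := Real.sqrt_pos.2 (by linarith)
  set ε := min 1 (2*μ*π^2*Real.exp (-2*A1)) with hε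
  have hεpos : 0 < ε := lt_min one_pos (by positivity)
  have hεle1 : ε ≤ 1 := min_le_left _ _
  set c := Real.sqrt (2*μ+ε) with hc
  have hcsq : c^2 = 2*μ+ε := Real.sq_sqrt (by linarith)
  have hcpos : 0 < c := Real.sqrt_pos.2 (by linarith)
  have h2 : 2*μ < c^2 := by rw [hcsq]; linarith
  have hcA1 : c ≤ A1 := Real.sqrt_le_sqrt (by linarith)
  refine ⟨c, hcpos.le, h2, ?_⟩
  have hεs : 0 < Real.sqrt ε := Real.sqrt_pos.2 hεpos
  -- pointwise lower bound for the integrand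
  have hlb : ∀ u ∈ Icc (0:ℝ) π,
      Real.sqrt 2 * (Real.sqrt ε + c*u)⁻¹ ≤ (gg μ c u)⁻¹ := by
    intro u hu
    have hden : 0 < Real.sqrt ε + c*u := by
      have : 0 ≤ c*u := mul_nonneg hcpos.le hu.1
      linarith
    have hsin : Real.sin u ^ 2 ≤ u^2 := by
      have h1 : 0 ≤ Real.sin u := Real.sin_nonneg_of_nonneg_of_le_pi hu.1 hu.2
      have h2' : Real.sin u ≤ u := Real.sin_le hu.1
      nlinarith
    have hgb : gg μ c u ≤ (Real.sqrt ε + c*u) / Real.sqrt 2 := by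
      have e1 : gg μ c u ≤ Real.sqrt ((ε + c^2*u^2)/2) := by
        apply Real.sqrt_le_sqrt
        rw [hcsq]; nlinarith
      have e2 : Real.sqrt ((ε + c^2*u^2)/2) = Real.sqrt (ε + c^2*u^2) / Real.sqrt 2 :=
        Real.sqrt_div' _ (by norm_num)
      have e3 : Real.sqrt (ε + c^2*u^2) ≤ Real.sqrt ε + c*u := by
        have := sqrt_add_le' hεpos.le (by positivity : (0:ℝ) ≤ c^2*u^2)
        have e4 : Real.sqrt (c^2*u^2) = c*u := by
          rw [show c^2*u^2 = (c*u)^2 by ring]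
          exact Real.sqrt_sq (mul_nonneg hcpos.le hu.1)
        linarith [e4 ▸ this]
      calc gg μ c u ≤ Real.sqrt (ε + c^2*u^2) / Real.sqrt 2 := e2 ▸ e1
        _ ≤ (Real.sqrt ε + c*u) / Real.sqrt 2 := by gcongr
    -- invert
    have hgpos := gg_pos h2 u
    rw [show Real.sqrt 2 * (Real.sqrt ε + c*u)⁻¹ = ((Real.sqrt ε + c*u)/Real.sqrt 2)⁻¹ by
      rw [inv_div]; ring]
    exact inv_anti₀ hgpos hgb
  -- integral of the lower bound
  have hprim : ∀ u ∈ uIcc (0:ℝ) π, HasDerivAt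
      (fun u => (Real.sqrt 2/c) * Real.log (Real.sqrt ε + c*u))
      (Real.sqrt 2 * (Real.sqrt ε + c*u)⁻¹) u := by
    intro u hu
    rw [uIcc_of_le hπ.le] at hu
    have hden : 0 < Real.sqrt ε + c*u := by
      have : 0 ≤ c*u := mul_nonneg hcpos.le hu.1
      linarith
    have h1 : HasDerivAt (fun u : ℝ => Real.sqrt ε + c*u) c u := by
      simpa using ((hasDerivAt_id u).const_mul c).const_add (Real.sqrt ε)
    have h2' := (h1.log hden.ne').const_mul (Real.sqrt 2/c)
    refine h2'.congr_deriv (Eq.symm ?_)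
    field_simp
  have hint : ∫ u in (0:ℝ)..π, Real.sqrt 2 * (Real.sqrt ε + c*u)⁻¹
      = (Real.sqrt 2/c) * Real.log (Real.sqrt ε + c*π)
        - (Real.sqrt 2/c) * Real.log (Real.sqrt ε + c*0) := by
    apply intervalIntegral.integral_eq_sub_of_hasDerivAt hprim
    apply ContinuousOn.intervalIntegrable
    apply ContinuousOn.mul continuousOn_const
    apply ContinuousOn.inv₀
    · fun_prop
    · intro u hu
      rw [uIcc_of_le hπ.le] at hu
      have h0cu : 0 ≤ c*u := mul_nonneg hcpos.le hu.1
      positivity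
  -- the lower bound integral exceeds 1
  have hkey : 1 < (Real.sqrt 2/c) * Real.log (Real.sqrt ε + c*π)
        - (Real.sqrt 2/c) * Real.log (Real.sqrt ε + c*0) := by
    have hs2 : (1:ℝ) < Real.sqrt 2 := by
      rw [show (1:ℝ) = Real.sqrt 1 from (Real.sqrt_one).symm]
      exact Real.sqrt_lt_sqrt (by norm_num) (by norm_num)
    have hlog1 : Real.log (Real.sqrt ε + c*0) = Real.log (Real.sqrt ε) := by norm_num
    have hmono : Real.log (c*π) ≤ Real.log (Real.sqrt ε + c*π) :=
      Real.log_le_log (by positivity) (by nlinarith)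
    -- √ε ≤ √(2μ) * π * exp (-A1)
    have hεb : Real.sqrt ε ≤ Real.sqrt (2*μ) * π * Real.exp (-A1) := by
      have h5 : ε ≤ 2*μ*π^2*Real.exp (-2*A1) := min_le_right _ _
      have h6 : Real.sqrt (2*μ*π^2*Real.exp (-2*A1))
          = Real.sqrt (2*μ) * π * Real.exp (-A1) := by
        rw [show 2*μ*π^2*Real.exp (-2*A1) = (2*μ) * (π^2 * Real.exp (-2*A1)) by ring,
          Real.sqrt_mul (by linarith), Real.sqrt_mul (sq_nonneg π),
          Real.sqrt_sq hπ.le, show Real.exp (-2*A1) = (Real.exp (-A1))^2 by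
            rw [sq, ← Real.exp_add]; ring_nf,
          Real.sqrt_sq (Real.exp_pos _).le]
        ring
      calc Real.sqrt ε ≤ Real.sqrt (2*μ*π^2*Real.exp (-2*A1)) := Real.sqrt_le_sqrt h5
        _ = _ := h6
    have hc2μ : Real.sqrt (2*μ) ≤ c := Real.sqrt_le_sqrt (by linarith)
    have hlogd : A1 ≤ Real.log (Real.sqrt ε + c*π) - Real.log (Real.sqrt ε) := by
      have h7 : Real.log (Real.sqrt ε) ≤ Real.log (Real.sqrt (2*μ) * π) - A1 := by
        calc Real.log (Real.sqrt ε) ≤ Real.log (Real.sqrt (2*μ) * π * Real.exp (-A1)) :=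
              Real.log_le_log hεs hεb
          _ = Real.log (Real.sqrt (2*μ) * π) + Real.log (Real.exp (-A1)) :=
              Real.log_mul (by positivity) (Real.exp_pos _).ne'
          _ = Real.log (Real.sqrt (2*μ) * π) - A1 := by rw [Real.log_exp]; ring
      have h8 : Real.log (Real.sqrt (2*μ) * π) ≤ Real.log (c*π) :=
        Real.log_le_log (by positivity) (by nlinarith)
      linarith
    have hfrac : 1 ≤ A1 / c := by
      rw [le_div_iff₀ hcpos]; linarith
    have hcalc : Real.sqrt 2 / c * A1 ≥ Real.sqrt 2 := by
      rw [ge_iff_le, div_mul_eq_mul_div, le_div_iff₀ hcpos]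
      nlinarith
    rw [hlog1]
    have h9 : Real.sqrt 2 / c * (Real.log (Real.sqrt ε + c*π) - Real.log (Real.sqrt ε))
        ≥ Real.sqrt 2 / c * A1 := by
      apply mul_le_mul_of_nonneg_left hlogd (by positivity)
    calc (1:ℝ) < Real.sqrt 2 := hs2
      _ ≤ Real.sqrt 2 / c * A1 := hcalc
      _ ≤ _ := by linarith [h9]
  have hii : IntervalIntegrable (fun u => Real.sqrt 2 * (Real.sqrt ε + c*u)⁻¹)
      MeasureTheory.volume 0 π := by
    apply ContinuousOn.intervalIntegrable
    apply ContinuousOn.mul continuousOn_const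
    apply ContinuousOn.inv₀
    · fun_prop
    · intro u hu
      rw [uIcc_of_le hπ.le] at hu
      have : 0 ≤ c*u := mul_nonneg hcpos.le hu.1
      positivity
  have hmono := intervalIntegral.integral_mono_on Real.pi_pos.le hii
    ((continuous_invgg h2).intervalIntegrable _ _) hlb
  rw [hint] at hmono
  unfold HH
  linarith
lemma S_strict (ha0 : 0 ≤ a) {b : ℝ} (hab : a < b) (ha2 : 2*μ < a^2) :
    HH μ b π < HH μ a π := by
  have hb2 : 2*μ < b^2 := lt_of_lt_of_le ha2 (by nlinarith)
  have hptwise : ∀ u : ℝ, (gg μ b u)⁻¹ < (gg μ a u)⁻¹ := by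
    intro u
    have h1 : gg μ a u < gg μ b u := by
      apply Real.sqrt_lt_sqrt (inner_pos ha2 u).le
      have hsq : a^2 < b^2 := by nlinarith
      have key : a^2*(1 + Real.sin u^2) < b^2*(1 + Real.sin u^2) := by
        apply mul_lt_mul_of_pos_right hsq
        positivity
      linarith
    exact inv_strictAntiOn (mem_Ioi.2 (gg_pos ha2 u)) (mem_Ioi.2 (gg_pos hb2 u)) h1
  unfold HH
  apply intervalIntegral.integral_lt_integral_of_continuousOn_of_le_of_exists_lt Real.pi_pos
  · exact (continuous_invgg hb2).continuousOn
  · exact (continuous_invgg ha2).continuousOn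
  · exact fun u _ => (hptwise u).le
  · exact ⟨0, ⟨le_refl 0, Real.pi_pos.le⟩, hptwise 0⟩

lemma exists_amp (hμ : -Real.pi^2 < μ) : ∃ a, 0 < a ∧ 2*μ < a^2 ∧ HH μ a π = 1 := by
  have hπ := Real.pi_pos
  set A := Real.sqrt (2*μ + 4*Real.pi^2 + 1) with hA
  have hargA : (0:ℝ) < 2*μ + 4*Real.pi^2 + 1 := by nlinarith
  have hA2 : A^2 = 2*μ + 4*Real.pi^2 + 1 := Real.sq_sqrt hargA.le
  have hA0 : 0 < A := Real.sqrt_pos.2 hargA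
  have hA2μ : 2*μ < A^2 := by rw [hA2]; nlinarith
  have hSA : HH μ A π < 1 := S_big hμ
  obtain ⟨c, hc0, hc2, hcS⟩ : ∃ c, 0 ≤ c ∧ 2*μ < c^2 ∧ 1 < HH μ c π := by
    rcases lt_trichotomy μ 0 with hneg | h0 | hpos
    · exact ⟨0, le_refl 0, by nlinarith, S_zero_gt hμ hneg⟩
    · exact ⟨1, by norm_num, by rw [h0]; norm_num, S_one_gt h0⟩
    · exact S_small_gt hpos
  have hcA : c < A := by
    by_contra hcon
    push_neg at hcon
    rcases eq_or_lt_of_le hcon with heq | hlt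
    · rw [heq] at hSA; linarith
    · have := S_strict hA0.le hlt hA2μ
      linarith
  have hcont : ContinuousOn (fun b => HH μ b π) (Icc c A) := by
    intro b hb
    have : 2*μ < b^2 := lt_of_lt_of_le hc2 (by nlinarith [hb.1])
    exact (S_contAt this).continuousWithinAt
  have hIVT := intermediate_value_Icc' hcA.le hcont
  obtain ⟨x, hxmem, hSx⟩ := hIVT ⟨hSA.le, hcS.le⟩
  have hx2 : 2*μ < x^2 := lt_of_lt_of_le hc2 (by nlinarith [hxmem.1])
  refine ⟨x, ?_, hx2, hSx⟩
  rcases lt_or_eq_of_le (le_trans hc0 hxmem.1) with h | h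
  · exact h
  · exfalso
    rw [← h] at hx2 hSx
    change HH μ 0 π = 1 at hSx
    have hneg : μ < 0 := by nlinarith
    rw [S_zero_val hneg] at hSx
    have h2 : 0 < Real.sqrt (-μ) := Real.sqrt_pos.2 (by linarith)
    have h3 : π = Real.sqrt (-μ) := by
      field_simp at hSx
      linarith
    have h4 : π^2 = -μ := by
      rw [h3]; exact Real.sq_sqrt (by linarith)
    linarith
lemma tt_one (h : 2*μ < a^2) (hS : HH μ a π = 1) : tt μ a 1 = π := by
  conv_lhs => rw [← hS]
  exact tt_HH h π

lemma pp_zero (h : 2*μ < a^2) : pp μ a 0 = 0 := by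
  unfold pp; rw [tt_zero h]; simp

lemma pp_one (h : 2*μ < a^2) (hS : HH μ a π = 1) : pp μ a 1 = 0 := by
  unfold pp; rw [tt_one h hS]; simp

lemma pp_pos (h : 2*μ < a^2) (ha0 : 0 < a) (hS : HH μ a π = 1) :
    ∀ x ∈ Ioo (0:ℝ) 1, 0 < pp μ a x := by
  intro x hx
  have h1 : 0 < tt μ a x := by
    rw [← tt_zero h (a := a)]
    exact strictMono_tt h hx.1
  have h2 : tt μ a x < π := by
    rw [← tt_one h hS]
    exact strictMono_tt h hx.2
  exact mul_pos ha0 (Real.sin_pos_of_pos_of_lt_pi h1 h2)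
lemma unique_gs (hμ : -Real.pi^2 < μ) (ha0 : 0 < a) (ha2 : 2*μ < a^2)
    (hSa : HH μ a π = 1) {ψ ψ1 ψ2 : ℝ → ℝ}
    (hder : ∀ x ∈ Icc (0:ℝ) 1, HasDerivAt ψ (ψ1 x) x ∧ HasDerivAt ψ1 (ψ2 x) x)
    (h0 : ψ 0 = 0) (h1 : ψ 1 = 0)
    (hpos : ∀ x ∈ Ioo (0:ℝ) 1, 0 < ψ x)
    (heq : ∀ x ∈ Icc (0:ℝ) 1, ψ2 x + ψ x^3 = μ * ψ x) :
    EqOn ψ (pp μ a) (Icc 0 1) := by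
  have hψd : ∀ x ∈ Icc (0:ℝ) 1, HasDerivAt ψ (ψ1 x) x := fun x hx => (hder x hx).1
  have hψ1d : ∀ x ∈ Icc (0:ℝ) 1, HasDerivAt ψ1 (μ * ψ x - ψ x^3) x := by
    intro x hx
    have h2 := (hder x hx).2
    have h3 : ψ2 x = μ * ψ x - ψ x^3 := by linarith [heq x hx]
    rwa [h3] at h2
  -- `ψ1 0 ≠ 0` (otherwise `ψ ≡ 0`)
  have hψ10ne : ψ1 0 ≠ 0 := by
    intro hz
    have hg : ∀ x ∈ Icc (0:ℝ) 1, HasDerivAt (fun _ : ℝ => (0:ℝ)) ((fun _ : ℝ => (0:ℝ)) x) x :=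
      fun x _ => hasDerivAt_const x 0
    have hg1 : ∀ x ∈ Icc (0:ℝ) 1, HasDerivAt (fun _ : ℝ => (0:ℝ))
        (μ * (fun _ : ℝ => (0:ℝ)) x - ((fun _ : ℝ => (0:ℝ)) x)^3) x := by
      intro x _
      have : μ * (0:ℝ) - (0:ℝ)^3 = 0 := by ring
      simpa [this] using hasDerivAt_const x (0:ℝ)
    have huniq := ode_unique hψd hψ1d hg hg1 (by simpa using h0) (by simpa using hz)
    have hz2 := (huniq (1/2) ⟨by norm_num, by norm_num⟩).1
    have hp := hpos (1/2) ⟨by norm_num, by norm_num⟩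
    rw [hz2] at hp
    exact lt_irrefl 0 hp
  set E : ℝ := ψ1 0^2/2 with hEdef
  have hEpos : 0 < E := by
    have h2 : ψ1 0^2 ≠ 0 := pow_ne_zero 2 hψ10ne
    have h3 : 0 < ψ1 0^2 := lt_of_le_of_ne (sq_nonneg _) (Ne.symm h2)
    rw [hEdef]; linarith
  -- `ψ1 0 > 0`
  have hψ10pos : 0 < ψ1 0 := by
    rcases lt_trichotomy (ψ1 0) 0 with hneg | hz | hpos'
    · exfalso
      have hs := hasDerivAt_iff_tendsto_slope.1 (hψd 0 ⟨le_refl 0, zero_le_one⟩)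
      have hev : ∀ᶠ y in 𝓝[≠] (0:ℝ), slope ψ 0 y < 0 :=
        hs.eventually (Filter.Tendsto.eventually_lt_const hneg tendsto_id)
      have hsub : 𝓝[>] (0:ℝ) ≤ 𝓝[≠] (0:ℝ) :=
        nhdsWithin_mono 0 (fun y hy => by simp [ne_of_gt (mem_Ioi.1 hy)])
      have hev2 : ∀ᶠ y in 𝓝[>] (0:ℝ), slope ψ 0 y < 0 := hsub hev
      have hev3 : ∀ᶠ y in 𝓝[>] (0:ℝ), y ∈ Ioo (0:ℝ) 1 :=
        Ioo_mem_nhdsGT_of_mem ⟨le_refl 0, zero_lt_one⟩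
      obtain ⟨y, hy1, hy2⟩ := (hev2.and hev3).exists
      have hyp : 0 < ψ y := hpos y hy2
      have hslope : slope ψ 0 y = ψ y / y := by
        rw [slope_def_field, h0]; simp
      rw [hslope] at hy1
      have : 0 < ψ y / y := div_pos hyp hy2.1
      linarith
    · exact absurd hz hψ10ne
    · exact hpos'
  -- the amplitude of `ψ`
  set s : ℝ := Real.sqrt (μ^2 + 4*E) with hsdef
  have hs2 : s^2 = μ^2 + 4*E := Real.sq_sqrt (by positivity)
  have hs0 : 0 ≤ s := Real.sqrt_nonneg _
  have hsμ : μ < s := by nlinarith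
  set b : ℝ := Real.sqrt (μ + s) with hbdef
  have hb2 : b^2 = μ + s := Real.sq_sqrt (by nlinarith)
  have hb2μ : 2*μ < b^2 := by rw [hb2]; linarith
  have hb0 : 0 < b := Real.sqrt_pos.2 (by nlinarith)
  -- initial slopes agree
  have hp10 : p1 μ b 0 = ψ1 0 := by
    unfold p1
    rw [tt_zero hb2μ, Real.cos_zero]
    have hgg0 : gg μ b 0 = Real.sqrt ((b^2-2*μ)/2) := by
      unfold gg
      rw [Real.sin_zero]
      congr 1
      ring
    rw [hgg0]
    have hsq2 : 0 < (b^2-2*μ)/2 := by linarith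
    have hL0 : 0 < b * Real.sqrt ((b^2-2*μ)/2) := mul_pos hb0 (Real.sqrt_pos.2 hsq2)
    have hsq : (b * Real.sqrt ((b^2-2*μ)/2))^2 = ψ1 0^2 := by
      rw [mul_pow, Real.sq_sqrt hsq2.le]
      have hψE : ψ1 0^2 = 2*E := by rw [hEdef]; ring
      rw [hψE, hb2]
      nlinarith
    have h5 : b * Real.sqrt ((b^2-2*μ)/2) = Real.sqrt (ψ1 0^2) := by
      rw [← hsq, Real.sqrt_sq hL0.le]
    rw [Real.sqrt_sq hψ10pos.le] at h5
    rw [mul_one]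
    exact h5
  -- ψ coincides with pp μ b
  have hppd : ∀ x ∈ Icc (0:ℝ) 1, HasDerivAt (pp μ b) (p1 μ b x) x :=
    fun x _ => hasDerivAt_pp hb2μ x
  have hp1d : ∀ x ∈ Icc (0:ℝ) 1, HasDerivAt (p1 μ b) (μ * pp μ b x - pp μ b x^3) x := by
    intro x _
    have := hasDerivAt_p1 hb2μ x
    simpa [p2] using this
  have huniq := ode_unique hψd hψ1d hppd hp1d (by rw [h0, pp_zero hb2μ]) (by rw [hp10])
  -- deduce `HH μ b π = 1`
  have hppb1 : pp μ b 1 = 0 := by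
    rw [← (huniq 1 ⟨zero_le_one, le_refl 1⟩).1]
    exact h1
  have htt1pos : 0 < tt μ b 1 := by
    rw [← tt_zero hb2μ (a := b)]
    exact strictMono_tt hb2μ one_pos
  have hsin0 : Real.sin (tt μ b 1) = 0 := by
    unfold pp at hppb1
    rcases mul_eq_zero.1 hppb1 with h | h
    · exact absurd h hb0.ne'
    · exact h
  have htt1le : tt μ b 1 ≤ π := by
    by_contra hcon
    push_neg at hcon
    set x₀ := HH μ b π with hx₀def
    have hx₀pos : 0 < x₀ := by
      rw [hx₀def, ← HH_zero (μ := μ) (a := b)]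
      exact strictMono_HH hb2μ Real.pi_pos
    have hx₀lt : x₀ < 1 := by
      have h6 := strictMono_HH hb2μ hcon
      rwa [HH_tt hb2μ] at h6
    have htx₀ : tt μ b x₀ = π := tt_HH hb2μ π
    have hψx₀ : 0 < ψ x₀ := hpos x₀ ⟨hx₀pos, hx₀lt⟩
    have h7 := (huniq x₀ ⟨hx₀pos.le, hx₀lt.le⟩).1
    rw [h7] at hψx₀
    unfold pp at hψx₀
    rw [htx₀] at hψx₀
    simp [Real.sin_pi] at hψx₀
  obtain ⟨n, hn⟩ := Real.sin_eq_zero_iff.1 hsin0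
  have hπ := Real.pi_pos
  have hn1 : (n:ℝ) = 1 := by
    have h1' : (0:ℝ) < n := by nlinarith
    have h2' : (n:ℝ) ≤ 1 := by nlinarith
    have h3' : (1:ℤ) ≤ n := by exact_mod_cast h1'
    have h4' : n ≤ (1:ℤ) := by exact_mod_cast h2'
    have : n = 1 := le_antisymm h4' h3'
    rw [this]; norm_num
  have hSb : HH μ b π = 1 := by
    have h8 : tt μ b 1 = π := by rw [← hn, hn1, one_mul]
    have h9 := congrArg (HH μ b) h8
    rw [HH_tt hb2μ] at h9
    exact h9.symm
  -- conclude `a = b`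
  have hab : a = b := by
    rcases lt_trichotomy a b with h | h | h
    · exfalso
      have := S_strict ha0.le h ha2
      rw [hSa, hSb] at this
      exact lt_irrefl 1 this
    · exact h
    · exfalso
      have := S_strict hb0.le h hb2μ
      rw [hSa, hSb] at this
      exact lt_irrefl 1 this
  intro x hx
  rw [hab]
  exact (huniq x hx).1
end GSaux

open Set

/-- `φ` is a (classical, C³ up to the boundary, hence `H³ ∩ H¹₀`) positive solution of the
focusing ground state problem `φ'' + φ³ = μ φ` on `(0,1)`, `φ(0)=φ(1)=0`. -/
def IsGroundState (μ : ℝ) (φ : ℝ → ℝ) : Prop :=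
  ∃ φ' φ'' φ''' : ℝ → ℝ,
    (∀ x ∈ Set.Icc (0:ℝ) 1, HasDerivAt φ (φ' x) x ∧ HasDerivAt φ' (φ'' x) x ∧
      HasDerivAt φ'' (φ''' x) x) ∧
    ContinuousOn φ''' (Set.Icc 0 1) ∧
    φ 0 = 0 ∧ φ 1 = 0 ∧
    (∀ x ∈ Set.Ioo (0:ℝ) 1, 0 < φ x) ∧
    (∀ x ∈ Set.Icc (0:ℝ) 1, φ'' x + φ x ^ 3 = μ * φ x)

/-- for every `μ > -π²` there is a unique positive solution
`φ_μ ∈ H³ ∩ H¹₀((0,1),ℝ)` of `φ'' + φ³ = μ φ`, `φ(0)=φ(1)=0`. -/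
theorem stmt_2 (μ : ℝ) (hμ : -Real.pi ^ 2 < μ) :
    ∃ φ : ℝ → ℝ, IsGroundState μ φ ∧
      ∀ ψ : ℝ → ℝ, IsGroundState μ ψ → Set.EqOn ψ φ (Set.Icc 0 1) := by
  have hμ' : -Real.pi^2 < μ := hμ
  obtain ⟨a, ha0, ha2, hSa⟩ := GSaux.exists_amp hμ'
  refine ⟨GSaux.pp μ a, ?_, ?_⟩
  · refine ⟨GSaux.p1 μ a, GSaux.p2 μ a, GSaux.p3 μ a,
      fun x _ => ⟨GSaux.hasDerivAt_pp ha2 x, GSaux.hasDerivAt_p1 ha2 x,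
        GSaux.hasDerivAt_p2 ha2 x⟩,
      (GSaux.continuous_p3 ha2).continuousOn,
      GSaux.pp_zero ha2, GSaux.pp_one ha2 hSa, GSaux.pp_pos ha2 ha0 hSa,
      fun x _ => by unfold GSaux.p2; ring⟩
  · rintro ψ ⟨ψ1, ψ2, ψ3, hder, hc3, h0, h1, hpos, heq⟩
    exact GSaux.unique_gs hμ' ha0 ha2 hSa
      (fun x hx => ⟨(hder x hx).1, (hder x hx).2.1⟩) h0 h1 hpos heq
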